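/- Let C be a real number with 0 < |C| < 1. The set of complex roots of the polynomial q(z) = z^4 + 2(2C^2 - 1)z^2 + 1 is exactly {e^{iθ}, e^{-iθ}, -e^{iθ}, -e^{-iθ}}, where θ = (1/2)·arccos(1 - 2C^2); moreover θ ∈ (0, π/2), so these are four distinct points, all of modulus one. -/

import Mathlib

open Real Complex

/-- For `0 < |C| < 1`, the roots of `z^4 + 2(2C^2-1)z^2 + 1` are exactly
`{e^{iθ}, e^{-iθ}, -e^{iθ}, -e^{-iθ}}` with `θ = arccos(1 - 2C^2)/2 ∈ (0, π/2)`;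
these are four pairwise distinct points, all of modulus one. -/
theorem branch_points_of_leapfrog (C : ℝ) (hC0 : 0 < |C|) (hC1 : |C| < 1) :
    let θ : ℝ := Real.arccos (1 - 2 * C ^ 2) / 2
    (0 < θ ∧ θ < Real.pi / 2) ∧
    ({z : ℂ | z ^ 4 + 2 * (2 * (C : ℂ) ^ 2 - 1) * z ^ 2 + 1 = 0} =
      {Complex.exp (θ * Complex.I), Complex.exp (-(θ : ℂ) * Complex.I),
        -Complex.exp (θ * Complex.I), -Complex.exp (-(θ : ℂ) * Complex.I)}) ∧
    ([Complex.exp (θ * Complex.I), Complex.exp (-(θ : ℂ) * Complex.I),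
        -Complex.exp (θ * Complex.I), -Complex.exp (-(θ : ℂ) * Complex.I)] : List ℂ).Pairwise (· ≠ ·) ∧
    (∀ z : ℂ, z ^ 4 + 2 * (2 * (C : ℂ) ^ 2 - 1) * z ^ 2 + 1 = 0 → ‖z‖ = 1) := by
  intro θ
  have hθdef : θ = Real.arccos (1 - 2 * C ^ 2) / 2 := rfl
  clear_value θ
  have hC2 : (0:ℝ) < C ^ 2 := by nlinarith [_root_.sq_abs C]
  have hC2' : C ^ 2 < 1 := by nlinarith [_root_.sq_abs C]
  have h1 : -1 < 1 - 2 * C ^ 2 := by linarith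
  have h2 : 1 - 2 * C ^ 2 < 1 := by linarith
  have hθpos : 0 < θ := by
    have := Real.arccos_pos.mpr h2
    rw [hθdef]; positivity
  have hθlt : θ < Real.pi / 2 := by
    have hle := Real.arccos_le_pi (1 - 2 * C ^ 2)
    have hne : Real.arccos (1 - 2 * C ^ 2) ≠ Real.pi := by
      intro h; have := Real.arccos_eq_pi.mp h; linarith
    have : Real.arccos (1 - 2 * C ^ 2) < Real.pi := lt_of_le_of_ne hle hne
    rw [hθdef]; linarith
  have hcos : Real.cos (2 * θ) = 1 - 2 * C ^ 2 := by
    rw [hθdef, show 2 * (Real.arccos (1 - 2 * C ^ 2) / 2) = Real.arccos (1 - 2 * C ^ 2) by ring]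
    exact Real.cos_arccos h1.le h2.le
  set w : ℂ := Complex.exp (θ * Complex.I) with hw
  set v : ℂ := Complex.exp (-(θ:ℂ) * Complex.I) with hv
  have hvR : v = Complex.exp (((-θ : ℝ) : ℂ) * Complex.I) := by rw [hv]; push_cast; ring_nf
  have hwv : w * v = 1 := by
    rw [hw, hv, ← Complex.exp_add]; ring_nf; exact Complex.exp_zero
  have hsum : w ^ 2 + v ^ 2 = 2 - 4 * (C:ℂ) ^ 2 := by
    rw [hw, hv, ← Complex.exp_nat_mul, ← Complex.exp_nat_mul]
    rw [show ((2:ℕ):ℂ) * ((θ:ℂ) * Complex.I) = ((2*θ:ℝ):ℂ) * Complex.I by push_cast; ring]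
    rw [show ((2:ℕ):ℂ) * (-(θ:ℂ) * Complex.I) = ((-(2*θ):ℝ):ℂ) * Complex.I by push_cast; ring]
    rw [Complex.exp_mul_I, Complex.exp_mul_I]
    rw [← Complex.ofReal_sin, ← Complex.ofReal_cos, ← Complex.ofReal_sin, ← Complex.ofReal_cos]
    rw [Real.cos_neg, Real.sin_neg, hcos]
    push_cast
    ring
  have key : ∀ z : ℂ, z ^ 4 + 2 * (2 * (C : ℂ) ^ 2 - 1) * z ^ 2 + 1
      = (z - w) * (z + w) * ((z - v) * (z + v)) := by
    intro z
    linear_combination z ^ 2 * hsum - (w * v + 1) * hwv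
  have hsin : 0 < Real.sin θ :=
    Real.sin_pos_of_pos_of_lt_pi hθpos (by linarith [Real.pi_pos])
  have hcosθ : 0 < Real.cos θ :=
    Real.cos_pos_of_mem_Ioo ⟨by linarith, hθlt⟩
  have hwre : w.re = Real.cos θ := by rw [hw]; exact Complex.exp_ofReal_mul_I_re θ
  have hwim : w.im = Real.sin θ := by rw [hw]; exact Complex.exp_ofReal_mul_I_im θ
  have hvre : v.re = Real.cos θ := by
    rw [hvR, Complex.exp_ofReal_mul_I_re, Real.cos_neg]
  have hvim : v.im = -Real.sin θ := by
    rw [hvR, Complex.exp_ofReal_mul_I_im, Real.sin_neg]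
  have hwne : w ≠ v := by
    intro h
    have := congrArg Complex.im h
    rw [hwim, hvim] at this; linarith
  have hwnw : w ≠ -w := by
    intro h
    have := congrArg Complex.im h
    rw [Complex.neg_im, hwim] at this; linarith
  have hwnv : w ≠ -v := by
    intro h
    have := congrArg Complex.re h
    rw [Complex.neg_re, hwre, hvre] at this; linarith
  have hvnw : v ≠ -w := by
    intro h
    have := congrArg Complex.re h
    rw [Complex.neg_re, hvre, hwre] at this; linarith
  have hvnv : v ≠ -v := by
    intro h
    have := congrArg Complex.re h
    rw [Complex.neg_re, hvre] at this; linarith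
  have hset : {z : ℂ | z ^ 4 + 2 * (2 * (C : ℂ) ^ 2 - 1) * z ^ 2 + 1 = 0}
      = ({w, v, -w, -v} : Set ℂ) := by
    ext z
    rw [Set.mem_setOf_eq, key z]
    rw [mul_eq_zero, mul_eq_zero, mul_eq_zero, sub_eq_zero, sub_eq_zero,
      add_eq_zero_iff_eq_neg, add_eq_zero_iff_eq_neg]
    simp only [Set.mem_insert_iff, Set.mem_singleton_iff]
    constructor
    · rintro ((h | h) | h | h)
      · exact Or.inl h
      · exact Or.inr (Or.inr (Or.inl h))
      · exact Or.inr (Or.inl h)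
      · exact Or.inr (Or.inr (Or.inr h))
    · rintro (h | h | h | h)
      · exact Or.inl (Or.inl h)
      · exact Or.inr (Or.inl h)
      · exact Or.inl (Or.inr h)
      · exact Or.inr (Or.inr h)
  refine ⟨⟨hθpos, hθlt⟩, hset, ?_, ?_⟩
  · refine List.Pairwise.cons ?_ (List.Pairwise.cons ?_ (List.Pairwise.cons ?_ (List.pairwise_singleton _ _)))
    · intro b hb
      simp only [List.mem_cons, List.not_mem_nil, or_false] at hb
      rcases hb with rfl | rfl | rfl
      · exact hwne
      · exact hwnw
      · exact hwnv
    · intro b hb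
      simp only [List.mem_cons, List.not_mem_nil, or_false] at hb
      rcases hb with rfl | rfl
      · exact hvnw
      · exact hvnv
    · intro b hb
      simp only [List.mem_cons, List.not_mem_nil, or_false] at hb
      subst hb
      exact fun h => hwne (neg_injective h)
  · intro z hz
    have : z ∈ ({w, v, -w, -v} : Set ℂ) := by rw [← hset]; exact hz
    have habsw : ‖w‖ = 1 := by rw [hw]; exact Complex.norm_exp_ofReal_mul_I θ
    have habsv : ‖v‖ = 1 := by rw [hvR]; exact Complex.norm_exp_ofReal_mul_I (-θ)
    rcases this with rfl | rfl | rfl | rfl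
    · exact habsw
    · exact habsv
    · rw [norm_neg]; exact habsw
    · rw [norm_neg]; exact habsv
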